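/- Let T be a bounded operator on a Hilbert space X satisfying the Ritt resolvent estimate ‖(λ - T)^{-1}‖ ≤ c₂/|λ - 1| for all |λ| > 1, and let B = I - T. Assume that there exist ν ∈ (π/2, π) and K₀ such that z + B is invertible with |z| ‖B (z + B)^{-2}‖ ≤ K₀ for all z ∈ Σ_ν = {ξ ≠ 0 : |Arg ξ| < ν}. Then there exists a constant K such that (1 - |ω|²) ‖(I - T)(I - ωT)^{-2}‖ ≤ K for all ω in the open unit disc. -/

import Mathlib

private lemma aux_inverse_eq {M : Type*} [MonoidWithZero M] {a b : M}
    (h1 : a * b = 1) (h2 : b * a = 1) : Ring.inverse a = b := by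
  have := Ring.inverse_unit (⟨a, b, h1, h2⟩ : Mˣ)
  simpa using this

open Real in
private lemma aux_geom (ν : ℝ) (hν1 : π / 2 < ν) (hν2 : ν < π) (z : ℂ)
    (h1 : 1 < ‖1 + z‖) (harg : ν ≤ |Complex.arg z|) : 2 * |Real.cos ν| < ‖z‖ := by
  have hνpos : 0 < ν := lt_trans (by positivity) hν1
  have hz0 : z ≠ 0 := by
    rintro rfl
    simp [Complex.arg_zero] at harg
    linarith
  have hcos : Real.cos ν < 0 :=
    Real.cos_neg_of_pi_div_two_lt_of_lt hν1 (by linarith [Real.pi_pos])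
  have habs : |Real.cos ν| = -Real.cos ν := abs_of_neg hcos
  have hz : 0 < ‖z‖ := norm_pos_iff.mpr hz0
  have hre : z.re ≤ ‖z‖ * Real.cos ν := by
    have h2 : Real.cos (Complex.arg z) = z.re / ‖z‖ := Complex.cos_arg hz0
    have h3 : Real.cos |Complex.arg z| ≤ Real.cos ν :=
      Real.cos_le_cos_of_nonneg_of_le_pi (le_of_lt hνpos) (Complex.abs_arg_le_pi z) harg
    rw [Real.cos_abs] at h3
    have h4 : z.re / ‖z‖ ≤ Real.cos ν := by rw [← h2]; exact h3
    have := (div_le_iff₀ hz).mp h4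
    linarith [this, mul_comm (Real.cos ν) ‖z‖]
  have hsq1 : ‖1 + z‖ ^ 2 = (1 + z.re) ^ 2 + z.im ^ 2 := by
    rw [Complex.sq_norm, Complex.normSq_apply]
    simp [Complex.add_re, Complex.add_im]
    ring
  have hsq2 : ‖z‖ ^ 2 = z.re ^ 2 + z.im ^ 2 := by
    rw [Complex.sq_norm, Complex.normSq_apply]; ring
  have h1' : 1 < ‖1 + z‖ ^ 2 := by nlinarith [norm_nonneg (1 + z)]
  rw [hsq1] at h1'
  rw [habs]
  nlinarith [hre, hz, hsq2]

private lemma aux_rw (a N : ℝ) (ha : a ≠ 0) :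
    (1 - (a⁻¹) ^ 2) * (a ^ 2 * N) = (a ^ 2 - 1) * N := by
  field_simp

private lemma aux_bound1 (L r N C c₂ : ℝ) (hL : 1 < L) (hr1 : 1 ≤ r) (hLr : L ≤ r + 1)
    (hN0 : 0 ≤ N) (hNr : N ≤ C * (c₂ / r) ^ 2) (hC0 : 0 ≤ C) :
    (L ^ 2 - 1) * N ≤ 3 * (C * c₂ ^ 2) := by
  have hr0 : 0 < r := lt_of_lt_of_le one_pos hr1
  have hD : (c₂ / r) ^ 2 * r ^ 2 = c₂ ^ 2 := by field_simp
  have hd0 : 0 ≤ (c₂ / r) ^ 2 := sq_nonneg _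
  have h1 : L ^ 2 - 1 ≤ 3 * r ^ 2 := by nlinarith
  have h2 : (L ^ 2 - 1) * N ≤ (3 * r ^ 2) * (C * (c₂ / r) ^ 2) :=
    mul_le_mul h1 hNr hN0 (by positivity)
  have h3 : (3 * r ^ 2) * (C * (c₂ / r) ^ 2) = 3 * (C * ((c₂ / r) ^ 2 * r ^ 2)) := by ring
  rw [h3, hD] at h2
  linarith

private lemma aux_bound2 (L r N K₀ : ℝ) (hL : 1 < L) (hr0 : 0 < r) (hr1 : r < 1)
    (hLr : L ≤ r + 1) (hN0 : 0 ≤ N) (hs : r * N ≤ K₀) :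
    (L ^ 2 - 1) * N ≤ 3 * K₀ := by
  have h1 : L ^ 2 - 1 ≤ 3 * r := by nlinarith
  have h2 : (L ^ 2 - 1) * N ≤ (3 * r) * N := mul_le_mul_of_nonneg_right h1 hN0
  nlinarith

private lemma aux_bound3 (L r N C c₂ ic : ℝ) (hL : 1 < L) (hr0 : 0 < r) (hic : 2 / r ≤ ic)
    (hLr : L ≤ r + 1) (hN0 : 0 ≤ N) (hNr : N ≤ C * (c₂ / r) ^ 2) (hC0 : 0 ≤ C) :
    (L ^ 2 - 1) * N ≤ (1 + ic) * (C * c₂ ^ 2) := by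
  have hic0 : 0 ≤ ic := le_trans (by positivity) hic
  have hD : (c₂ / r) ^ 2 * r ^ 2 = c₂ ^ 2 := by field_simp
  have h0 : 2 * r ≤ ic * r ^ 2 := by
    have := mul_le_mul_of_nonneg_right hic (le_of_lt (mul_pos hr0 hr0))
    have he : 2 / r * (r * r) = 2 * r := by field_simp
    nlinarith [this, he]
  have h1 : L ^ 2 - 1 ≤ (1 + ic) * r ^ 2 := by nlinarith
  have h2 : (L ^ 2 - 1) * N ≤ ((1 + ic) * r ^ 2) * (C * (c₂ / r) ^ 2) :=
    mul_le_mul h1 hNr hN0 (mul_nonneg (by linarith) (sq_nonneg r))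
  have h3 : ((1 + ic) * r ^ 2) * (C * (c₂ / r) ^ 2) = (1 + ic) * (C * ((c₂ / r) ^ 2 * r ^ 2)) := by
    ring
  rw [h3, hD] at h2
  linarith

set_option maxHeartbeats 800000 in
open Real in
/-- Under the Ritt resolvent estimate and the sector estimate |z| ‖B (z+B)^{-2}‖ ≤ K₀
on Σ_ν (ν > π/2), there is K with (1-|ω|²) ‖(I-T)(I-ωT)^{-2}‖ ≤ K on the unit disc. -/
theorem stmt13 {X : Type*} [NormedAddCommGroup X] [InnerProductSpace ℂ X] [CompleteSpace X]
    (T : X →L[ℂ] X) (c₂ : ℝ) (hc₂ : 0 ≤ c₂)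
    (hRitt : ∀ lam : ℂ, 1 < ‖lam‖ →
      IsUnit (lam • (1 : X →L[ℂ] X) - T) ∧
        ‖Ring.inverse (lam • (1 : X →L[ℂ] X) - T)‖ ≤ c₂ / ‖lam - 1‖)
    (ν : ℝ) (hν1 : π / 2 < ν) (hν2 : ν < π) (K₀ : ℝ)
    (hsec : ∀ z : ℂ, z ≠ 0 → |Complex.arg z| < ν →
      IsUnit (z • (1 : X →L[ℂ] X) + (1 - T)) ∧
        ‖z‖ * ‖(1 - T) * (Ring.inverse (z • (1 : X →L[ℂ] X) + (1 - T))) ^ 2‖ ≤ K₀) :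
    ∃ K : ℝ, ∀ ω : ℂ, ‖ω‖ < 1 →
      (1 - ‖ω‖ ^ 2) * ‖(1 - T) * (Ring.inverse (1 - ω • T)) ^ 2‖ ≤ K := by
  have hC0 : (0:ℝ) ≤ ‖(1 : X →L[ℂ] X) - T‖ := norm_nonneg _
  have hcos : Real.cos ν < 0 :=
    Real.cos_neg_of_pi_div_two_lt_of_lt hν1 (by linarith [Real.pi_pos])
  have hcpos : 0 < |Real.cos ν| := abs_pos.mpr (ne_of_lt hcos)
  have hνpos : 0 < ν := lt_trans (by positivity) hν1
  have hK₀ : 0 ≤ K₀ := by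
    have h := (hsec 1 one_ne_zero (by simpa [Complex.arg_one] using hνpos)).2
    exact le_trans (by positivity) h
  refine ⟨‖(1 : X →L[ℂ] X) - T‖ + 3 * (‖(1 : X →L[ℂ] X) - T‖ * c₂ ^ 2)
      + (1 + 1 / |Real.cos ν|) * (‖(1 : X →L[ℂ] X) - T‖ * c₂ ^ 2) + 3 * K₀, ?_⟩
  intro ω hω
  have hcc : 0 ≤ ‖(1 : X →L[ℂ] X) - T‖ * c₂ ^ 2 := by positivity
  have hinvc : 0 ≤ 1 / |Real.cos ν| := by positivity
  by_cases hω0 : ω = 0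
  · subst hω0
    simp only [zero_smul, sub_zero, Ring.inverse_one, one_pow, mul_one, norm_zero]
    nlinarith [hcc, hK₀, hinvc, mul_nonneg hinvc hcc, hC0]
  · have hω0' : 0 < ‖ω‖ := norm_pos_iff.mpr hω0
    set l : ℂ := ω⁻¹ with hldef
    have hl : 1 < ‖l‖ := by
      rw [hldef, norm_inv]
      exact (one_lt_inv₀ hω0').mpr hω
    obtain ⟨hu, hn⟩ := hRitt l hl
    set R : X →L[ℂ] X := Ring.inverse (l • (1 : X →L[ℂ] X) - T) with hR
    have key : (1 : X →L[ℂ] X) - ω • T = ω • (l • (1 : X →L[ℂ] X) - T) := by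
      rw [smul_sub, smul_smul, hldef, mul_inv_cancel₀ hω0, one_smul]
    have hinv : Ring.inverse ((1 : X →L[ℂ] X) - ω • T) = l • R := by
      apply aux_inverse_eq
      · rw [key, smul_mul_assoc, mul_smul_comm, smul_smul, hldef,
          mul_inv_cancel₀ hω0, one_smul, hR, Ring.mul_inverse_cancel _ hu]
      · rw [key, smul_mul_assoc, mul_smul_comm, smul_smul, hldef,
          inv_mul_cancel₀ hω0, one_smul, hR, Ring.inverse_mul_cancel _ hu]
    rw [hinv]
    have hpow : ((1 : X →L[ℂ] X) - T) * (l • R) ^ 2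
        = (l ^ 2) • (((1 : X →L[ℂ] X) - T) * R ^ 2) := by
      rw [smul_pow, mul_smul_comm]
    rw [hpow, norm_smul, norm_pow]
    have hωl : ‖ω‖ = ‖l‖⁻¹ := by rw [hldef, norm_inv, inv_inv]
    have hl0 : (0:ℝ) < ‖l‖ := lt_trans one_pos hl
    rw [hωl, aux_rw ‖l‖ _ (ne_of_gt hl0)]
    -- goal: (‖l‖^2 - 1) * ‖(1-T) * R^2‖ ≤ K
    have hN0 : 0 ≤ ‖((1 : X →L[ℂ] X) - T) * R ^ 2‖ := norm_nonneg _
    have hz0 : l - 1 ≠ 0 := by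
      rw [sub_ne_zero]
      intro h; rw [h] at hl; simp at hl
    have hr0 : 0 < ‖l - 1‖ := norm_pos_iff.mpr hz0
    have hlr : ‖l‖ ≤ ‖l - 1‖ + 1 := by
      calc ‖l‖ = ‖(l - 1) + 1‖ := by ring_nf
      _ ≤ ‖l - 1‖ + ‖(1:ℂ)‖ := norm_add_le _ _
      _ = ‖l - 1‖ + 1 := by simp
    have hNritt : ‖((1 : X →L[ℂ] X) - T) * R ^ 2‖
        ≤ ‖(1 : X →L[ℂ] X) - T‖ * (c₂ / ‖l - 1‖) ^ 2 := by
      have h1 := norm_mul_le ((1 : X →L[ℂ] X) - T) (R ^ 2)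
      have h2 : ‖R ^ 2‖ ≤ ‖R‖ ^ 2 := norm_pow_le' R two_pos
      have h4 : ‖R‖ ^ 2 ≤ (c₂ / ‖l - 1‖) ^ 2 := pow_le_pow_left₀ (norm_nonneg _) hn 2
      calc ‖((1 : X →L[ℂ] X) - T) * R ^ 2‖ ≤ ‖(1 : X →L[ℂ] X) - T‖ * ‖R ^ 2‖ := h1
      _ ≤ ‖(1 : X →L[ℂ] X) - T‖ * ‖R‖ ^ 2 := mul_le_mul_of_nonneg_left h2 hC0
      _ ≤ ‖(1 : X →L[ℂ] X) - T‖ * (c₂ / ‖l - 1‖) ^ 2 := mul_le_mul_of_nonneg_left h4 hC0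
    by_cases hr1 : 1 ≤ ‖l - 1‖
    · have := aux_bound1 ‖l‖ ‖l - 1‖ _ _ c₂ hl hr1 hlr hN0 hNritt hC0
      nlinarith [hK₀, hcc, mul_nonneg hinvc hcc, hC0]
    · push_neg at hr1
      by_cases harg : |Complex.arg (l - 1)| < ν
      · obtain ⟨hu2, hs⟩ := hsec (l - 1) hz0 harg
        have heq : (l - 1) • (1 : X →L[ℂ] X) + ((1 : X →L[ℂ] X) - T)
            = l • (1 : X →L[ℂ] X) - T := by
          rw [sub_smul, one_smul]; abel
        rw [heq, ← hR] at hs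
        have := aux_bound2 ‖l‖ ‖l - 1‖ _ K₀ hl hr0 hr1 hlr hN0 hs
        nlinarith [hcc, mul_nonneg hinvc hcc, hC0]
      · push_neg at harg
        have hgeom : 2 * |Real.cos ν| < ‖l - 1‖ := by
          have h1z : 1 < ‖1 + (l - 1)‖ := by
            have he : (1 : ℂ) + (l - 1) = l := by ring
            rw [he]; exact hl
          exact aux_geom ν hν1 hν2 (l - 1) h1z harg
        have h7 : 2 / ‖l - 1‖ ≤ 1 / |Real.cos ν| := by
          rw [div_le_div_iff₀ hr0 hcpos]
          linarith
        have := aux_bound3 ‖l‖ ‖l - 1‖ _ _ c₂ (1 / |Real.cos ν|) hl hr0 h7 hlr hN0 hNritt hC0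
        nlinarith [hK₀, hcc, hC0]
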